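/- Assume Ric_G(e) < 0 (so ρ ≥ 1). Then every set E' of permissible insertions with Ric_{G+E'}(e) > 0 satisfies |E'| ≥ (ρ+1)/(2(a+b)), where a = q/(deg_G(u)+1) and b = q/(deg_G(v)+1). -/

import Mathlib

open Finset
open scoped Classical

variable {V : Type*}

/-- The open neighborhood of `u` in `G`, as a finset. -/
noncomputable def nbrF [Fintype V] (G : SimpleGraph V) (u : V) : Finset V :=
  Finset.univ.filter fun x => G.Adj u x

/-- The degree of `u` in `G`. -/
noncomputable def degG [Fintype V] (G : SimpleGraph V) (u : V) : ℕ := (nbrF G u).card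

/-- The closed neighborhood `N[u]` of `u` in `G`. -/
noncomputable def cnbr [Fintype V] (G : SimpleGraph V) (u : V) : Finset V :=
  insert u (nbrF G u)

/-- A transport plan for `(G,u,v)`: nonnegative, with row sums `1/(deg u + 1)` over
`N[u]` and column sums `1/(deg v + 1)` over `N[v]`. -/
def IsPlanG [Fintype V] (G : SimpleGraph V) (u v : V) (z : V → V → ℝ) : Prop :=
  (∀ x y, 0 ≤ z x y) ∧
  (∀ x ∈ cnbr G u, ∑ y ∈ cnbr G v, z x y = 1 / ((degG G u : ℝ) + 1)) ∧
  (∀ y ∈ cnbr G v, ∑ x ∈ cnbr G u, z x y = 1 / ((degG G v : ℝ) + 1))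

/-- The cost of a transport plan, with respect to shortest-path distance in `G`. -/
noncomputable def planCostG [Fintype V] (G : SimpleGraph V) (u v : V) (z : V → V → ℝ) : ℝ :=
  ∑ x ∈ cnbr G u, ∑ y ∈ cnbr G v, (G.dist x y : ℝ) * z x y

/-- The earth mover's distance `EMD_G(u,v)`: the minimum cost of a transport plan. -/
noncomputable def EMDG [Fintype V] (G : SimpleGraph V) (u v : V) : ℝ :=
  sInf {t | ∃ z, IsPlanG G u v z ∧ planCostG G u v z = t}

/-- The Ollivier–Ricci curvature of the edge `{u,v}`. -/
noncomputable def RicG [Fintype V] (G : SimpleGraph V) (u v : V) : ℝ :=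
  1 - EMDG G u v

/-- The graph obtained from `G` by inserting every permissible pair `{x,y}` with
`x ∈ N_G(u)\{v}`, `y ∈ N_G(v)\{u}`, `x ≠ y`, `{x,y} ∉ E(G)`, as a new edge. -/
def addPerm (G : SimpleGraph V) (u v : V) : SimpleGraph V :=
  G ⊔ SimpleGraph.fromRel (fun x y => G.Adj u x ∧ x ≠ v ∧ G.Adj v y ∧ y ≠ u)

/- ==================== auxiliary lemmas ==================== -/

lemma nbrF_u_eq [Fintype V] {G G' : SimpleGraph V} {u v : V}
    (h1 : G ≤ G') (h2 : G' ≤ addPerm G u v) : nbrF G' u = nbrF G u := by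
  ext x
  simp only [nbrF, mem_filter, mem_univ, true_and]
  constructor
  · intro h
    rcases h2 h with h | h
    · exact h
    · rw [SimpleGraph.fromRel_adj] at h
      rcases h.2 with ⟨hA, _, _, _⟩ | ⟨_, _, _, hD⟩
      · exact absurd hA (G.irrefl)
      · exact absurd rfl hD
  · exact fun h => h1 h

lemma nbrF_v_eq [Fintype V] {G G' : SimpleGraph V} {u v : V}
    (h1 : G ≤ G') (h2 : G' ≤ addPerm G u v) : nbrF G' v = nbrF G v := by
  ext x
  simp only [nbrF, mem_filter, mem_univ, true_and]
  constructor
  · intro h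
    rcases h2 h with h | h
    · exact h
    · rw [SimpleGraph.fromRel_adj] at h
      rcases h.2 with ⟨_, hB, _, _⟩ | ⟨_, _, hC, _⟩
      · exact absurd rfl hB
      · exact absurd hC (G.irrefl)
  · exact fun h => h1 h

lemma card_cnbr [Fintype V] (G : SimpleGraph V) (u : V) :
    (cnbr G u).card = degG G u + 1 := by
  rw [cnbr, card_insert_of_notMem, degG]
  simp [nbrF]

/-- The set of ordered pairs that are edges of `G'` but not of `G`. -/
noncomputable def newPairs [Fintype V] (G G' : SimpleGraph V) : Finset (V × V) :=
  Finset.univ.filter fun p => G'.Adj p.1 p.2 ∧ ¬ G.Adj p.1 p.2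

lemma walk_length_two {G : SimpleGraph V} {x y : V} (p : G.Walk x y) (h : p.length = 2) :
    ∃ w, G.Adj x w ∧ G.Adj w y := by
  cases p with
  | nil => simp at h
  | @cons _ w _ hxw q =>
    refine ⟨w, hxw, ?_⟩
    simp only [SimpleGraph.Walk.length_cons] at h
    exact q.adj_of_length_eq_one (by omega)

/-- key distance decrease bound -/
lemma dist_key [Fintype V] {G G' : SimpleGraph V} (h1 : G ≤ G') {u v x y : V}
    (huv : G.Adj u v) (hx : x ∈ cnbr G u) (hy : y ∈ cnbr G v) :
    G.dist x y ≤ G'.dist x y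
      + ((newPairs G G').filter fun p => p.1 = x).card
      + ((newPairs G G').filter fun p => p.2 = y).card := by
  -- a G-walk from x to y of length ≤ 3
  obtain ⟨w1, hw1⟩ : ∃ w : G.Walk x u, w.length ≤ 1 := by
    rcases mem_insert.mp hx with h | h
    · subst h; exact ⟨SimpleGraph.Walk.nil, by simp⟩
    · simp only [nbrF, mem_filter] at h
      exact ⟨SimpleGraph.Walk.cons h.2.symm SimpleGraph.Walk.nil, by simp⟩
  obtain ⟨w2, hw2⟩ : ∃ w : G.Walk v y, w.length ≤ 1 := by
    rcases mem_insert.mp hy with h | h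
    · subst h; exact ⟨SimpleGraph.Walk.nil, by simp⟩
    · simp only [nbrF, mem_filter] at h
      exact ⟨SimpleGraph.Walk.cons h.2 SimpleGraph.Walk.nil, by simp⟩
  have hwalk : (w1.append (SimpleGraph.Walk.cons huv w2)).length ≤ 3 := by
    rw [SimpleGraph.Walk.length_append, SimpleGraph.Walk.length_cons]
    omega
  have hd3 : G.dist x y ≤ 3 := le_trans (SimpleGraph.dist_le _) hwalk
  by_cases hle : G.dist x y ≤ G'.dist x y
  · omega
  push_neg at hle
  have hxy : x ≠ y := by
    rintro rfl
    simp [SimpleGraph.dist_self] at hle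
  have hreach : G.Reachable x y := ⟨w1.append (SimpleGraph.Walk.cons huv w2)⟩
  have hreach' : G'.Reachable x y := ⟨(w1.append (SimpleGraph.Walk.cons huv w2)).mapLe h1⟩
  have hpos' : 0 < G'.dist x y := hreach'.pos_dist_of_ne hxy
  have hub : G'.dist x y ≤ 2 := by omega
  -- G'.dist x y is 1 or 2
  interval_cases h' : G'.dist x y
  · -- dist 1 : G'.Adj x y, not G.Adj x y
    have hadj' : G'.Adj x y := SimpleGraph.dist_eq_one_iff_adj.mp h'
    have hnadj : ¬ G.Adj x y := by
      intro hadj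
      have : G.dist x y = 1 := SimpleGraph.dist_eq_one_iff_adj.mpr hadj
      omega
    have hc1 : 0 < ((newPairs G G').filter fun p => p.1 = x).card := by
      refine card_pos.mpr ⟨(x, y), ?_⟩
      simp [newPairs, hadj', hnadj]
    have hc2 : 0 < ((newPairs G G').filter fun p => p.2 = y).card := by
      refine card_pos.mpr ⟨(x, y), ?_⟩
      simp [newPairs, hadj', hnadj]
    omega
  · -- dist 2
    obtain ⟨p', hp'⟩ := hreach'.exists_walk_length_eq_dist
    obtain ⟨w, hxw, hwy⟩ := walk_length_two p' (by rw [hp', h'])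
    by_cases hxwG : G.Adj x w
    · have hwyG : ¬ G.Adj w y := by
        intro hwyG
        have : G.dist x y ≤ 2 := by
          have := SimpleGraph.dist_le (SimpleGraph.Walk.cons hxwG
            (SimpleGraph.Walk.cons hwyG SimpleGraph.Walk.nil))
          simpa using this
        omega
      have hc2 : 0 < ((newPairs G G').filter fun p => p.2 = y).card := by
        refine card_pos.mpr ⟨(w, y), ?_⟩
        simp [newPairs, hwy, hwyG]
      omega
    · have hc1 : 0 < ((newPairs G G').filter fun p => p.1 = x).card := by
        refine card_pos.mpr ⟨(x, w), ?_⟩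
        simp [newPairs, hxw, hxwG]
      omega


lemma planG_exists [Fintype V] (G : SimpleGraph V) (u v : V) :
    ∃ z, IsPlanG G u v z := by
  have hdu : ((degG G u : ℝ) + 1) ≠ 0 := by positivity
  have hdv : ((degG G v : ℝ) + 1) ≠ 0 := by positivity
  refine ⟨fun _ _ => (1/((degG G u : ℝ)+1)) * (1/((degG G v : ℝ)+1)), ?_, ?_, ?_⟩
  · intro x y; positivity
  · intro x _
    rw [Finset.sum_const, card_cnbr, nsmul_eq_mul]
    push_cast
    field_simp
  · intro y _
    rw [Finset.sum_const, card_cnbr, nsmul_eq_mul]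
    push_cast
    field_simp

lemma planCost_nonneg [Fintype V] (G : SimpleGraph V) (u v : V) {z : V → V → ℝ}
    (hz : ∀ x y, 0 ≤ z x y) : 0 ≤ planCostG G u v z :=
  Finset.sum_nonneg fun x _ => Finset.sum_nonneg fun y _ =>
    mul_nonneg (by positivity) (hz x y)

lemma cost_compare [Fintype V] {G G' : SimpleGraph V} {u v : V} (huv : G.Adj u v)
    (h1 : G ≤ G') (h2 : G' ≤ addPerm G u v) {z : V → V → ℝ} (hz : IsPlanG G u v z) :
    planCostG G u v z ≤ planCostG G' u v z +
      ((newPairs G G').card : ℝ) * (1/((degG G u : ℝ)+1) + 1/((degG G v : ℝ)+1)) := by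
  classical
  set P := newPairs G G' with hP
  obtain ⟨hz0, hrow, hcol⟩ := hz
  have hcu : cnbr G' u = cnbr G u := by rw [cnbr, cnbr, nbrF_u_eq h1 h2]
  have hcv : cnbr G' v = cnbr G v := by rw [cnbr, cnbr, nbrF_v_eq h1 h2]
  set c1 : V → ℕ := fun x => (P.filter fun p => p.1 = x).card with hc1
  set c2 : V → ℕ := fun y => (P.filter fun p => p.2 = y).card with hc2
  have step1 : planCostG G u v z ≤ ∑ x ∈ cnbr G u, ∑ y ∈ cnbr G v,
      ((G'.dist x y : ℝ) + (c1 x : ℝ) + (c2 y : ℝ)) * z x y := by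
    refine Finset.sum_le_sum fun x hx => Finset.sum_le_sum fun y hy => ?_
    refine mul_le_mul_of_nonneg_right ?_ (hz0 x y)
    have h := dist_key h1 huv hx hy
    push_cast
    exact_mod_cast h
  have split : ∑ x ∈ cnbr G u, ∑ y ∈ cnbr G v,
      ((G'.dist x y : ℝ) + (c1 x : ℝ) + (c2 y : ℝ)) * z x y
      = planCostG G' u v z
        + (∑ x ∈ cnbr G u, (c1 x : ℝ)) * (1/((degG G u : ℝ)+1))
        + (∑ y ∈ cnbr G v, (c2 y : ℝ)) * (1/((degG G v : ℝ)+1)) := by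
    rw [planCostG, hcu, hcv]
    have e1 : ∀ x ∈ cnbr G u, ∑ y ∈ cnbr G v,
        ((G'.dist x y : ℝ) + (c1 x : ℝ) + (c2 y : ℝ)) * z x y
        = (∑ y ∈ cnbr G v, (G'.dist x y : ℝ) * z x y)
          + (c1 x : ℝ) * (1/((degG G u : ℝ)+1))
          + ∑ y ∈ cnbr G v, (c2 y : ℝ) * z x y := by
      intro x hx
      have : ∑ y ∈ cnbr G v, ((G'.dist x y : ℝ) + (c1 x : ℝ) + (c2 y : ℝ)) * z x y
          = (∑ y ∈ cnbr G v, (G'.dist x y : ℝ) * z x y)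
            + (c1 x : ℝ) * (∑ y ∈ cnbr G v, z x y)
            + ∑ y ∈ cnbr G v, (c2 y : ℝ) * z x y := by
        rw [Finset.mul_sum, ← Finset.sum_add_distrib, ← Finset.sum_add_distrib]
        exact Finset.sum_congr rfl fun y _ => by ring
      rw [this, hrow x hx]
    rw [Finset.sum_congr rfl e1]
    rw [Finset.sum_add_distrib, Finset.sum_add_distrib, ← Finset.sum_mul]
    have e2 : ∑ x ∈ cnbr G u, ∑ y ∈ cnbr G v, (c2 y : ℝ) * z x y
        = (∑ y ∈ cnbr G v, (c2 y : ℝ)) * (1/((degG G v : ℝ)+1)) := by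
      rw [Finset.sum_comm, Finset.sum_mul]
      refine Finset.sum_congr rfl fun y hy => ?_
      rw [← Finset.mul_sum, hcol y hy]
    rw [e2]
  have hb1 : ∑ x ∈ cnbr G u, c1 x ≤ P.card := by
    have := Finset.card_eq_sum_card_fiberwise
      (f := fun p : V × V => p.1) (s := P) (t := Finset.univ)
      (fun p _ => Finset.mem_univ p.1)
    rw [this]
    exact Finset.sum_le_sum_of_subset (Finset.subset_univ _)
  have hb2 : ∑ y ∈ cnbr G v, c2 y ≤ P.card := by
    have := Finset.card_eq_sum_card_fiberwise
      (f := fun p : V × V => p.2) (s := P) (t := Finset.univ)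
      (fun p _ => Finset.mem_univ p.2)
    rw [this]
    exact Finset.sum_le_sum_of_subset (Finset.subset_univ _)
  have hb1' : (∑ x ∈ cnbr G u, (c1 x : ℝ)) ≤ (P.card : ℝ) := by exact_mod_cast hb1
  have hb2' : (∑ y ∈ cnbr G v, (c2 y : ℝ)) ≤ (P.card : ℝ) := by exact_mod_cast hb2
  have hk1 : (0:ℝ) ≤ 1/((degG G u : ℝ)+1) := by positivity
  have hk2 : (0:ℝ) ≤ 1/((degG G v : ℝ)+1) := by positivity
  calc planCostG G u v z ≤ _ := step1
    _ = _ := split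
    _ ≤ planCostG G' u v z + (P.card : ℝ) * (1/((degG G u : ℝ)+1))
        + (P.card : ℝ) * (1/((degG G v : ℝ)+1)) := by
        have t1 := mul_le_mul_of_nonneg_right hb1' hk1
        have t2 := mul_le_mul_of_nonneg_right hb2' hk2
        linarith
    _ = planCostG G' u v z + (P.card : ℝ) * (1/((degG G u : ℝ)+1) + 1/((degG G v : ℝ)+1)) := by
        ring

theorem stmt11 [Fintype V] (G : SimpleGraph V) (u v : V) (huv : G.Adj u v)
    (hdeg : degG G u ≤ degG G v)
    (q : ℕ) (hq : q = Nat.lcm (degG G u + 1) (degG G v + 1))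
    (ρ : ℤ) (hρ : (ρ : ℝ) = (q : ℝ) * EMDG G u v - (q : ℝ))
    (a b : ℕ) (ha : a = q / (degG G u + 1)) (hb : b = q / (degG G v + 1))
    (hneg : RicG G u v < 0) :
    ∀ G' : SimpleGraph V, G ≤ G' → G' ≤ addPerm G u v → 0 < RicG G' u v →
      ((ρ : ℝ) + 1) / (2 * ((a : ℝ) + (b : ℝ))) ≤ ((G'.edgeSet \ G.edgeSet).ncard : ℝ) := by
  intro G' hG1 hG2 hpos
  classical
  have hcu : cnbr G' u = cnbr G u := by rw [cnbr, cnbr, nbrF_u_eq hG1 hG2]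
  have hcv : cnbr G' v = cnbr G v := by rw [cnbr, cnbr, nbrF_v_eq hG1 hG2]
  have hdu : degG G' u = degG G u := by rw [degG, degG, nbrF_u_eq hG1 hG2]
  have hdv : degG G' v = degG G v := by rw [degG, degG, nbrF_v_eq hG1 hG2]
  have hplan_iff : ∀ z, IsPlanG G' u v z ↔ IsPlanG G u v z := by
    intro z
    rw [IsPlanG, IsPlanG, hcu, hcv, hdu, hdv]
  set C : ℝ := ((newPairs G G').card : ℝ) *
    (1/((degG G u : ℝ)+1) + 1/((degG G v : ℝ)+1)) with hC
  -- EMD comparison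
  have hEMD : EMDG G u v - C ≤ EMDG G' u v := by
    have hne : {t | ∃ z, IsPlanG G' u v z ∧ planCostG G' u v z = t}.Nonempty := by
      obtain ⟨z, hz⟩ := planG_exists G' u v
      exact ⟨planCostG G' u v z, z, hz, rfl⟩
    refine le_csInf hne ?_
    rintro t ⟨z, hz', rfl⟩
    have hz : IsPlanG G u v z := (hplan_iff z).mp hz'
    have hbdd : BddBelow {t | ∃ z, IsPlanG G u v z ∧ planCostG G u v z = t} := by
      refine ⟨0, ?_⟩
      rintro t ⟨z', hz'', rfl⟩
      exact planCost_nonneg G u v hz''.1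
    have h1 : EMDG G u v ≤ planCostG G u v z := csInf_le hbdd ⟨z, hz, rfl⟩
    have h2 := cost_compare huv hG1 hG2 hz
    linarith
  have hEMD' : EMDG G' u v < 1 := by
    rw [RicG] at hpos; linarith
  have hEMDlt : EMDG G u v < 1 + C := by linarith
  -- arithmetic on q, a, b
  have hq0 : q ≠ 0 := by
    rw [hq]
    exact Nat.lcm_ne_zero (Nat.succ_ne_zero _) (Nat.succ_ne_zero _)
  have haq : a * (degG G u + 1) = q := by
    rw [ha]
    exact Nat.div_mul_cancel (hq ▸ Nat.dvd_lcm_left _ _)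
  have hbq : b * (degG G v + 1) = q := by
    rw [hb]
    exact Nat.div_mul_cancel (hq ▸ Nat.dvd_lcm_right _ _)
  have hdu0 : ((degG G u : ℝ) + 1) ≠ 0 := by positivity
  have hdv0 : ((degG G v : ℝ) + 1) ≠ 0 := by positivity
  have hA : (q : ℝ) * (1/((degG G u : ℝ)+1)) = a := by
    have : ((a : ℝ)) * ((degG G u : ℝ) + 1) = q := by exact_mod_cast haq
    field_simp
    linarith [this]
  have hB : (q : ℝ) * (1/((degG G v : ℝ)+1)) = b := by
    have : ((b : ℝ)) * ((degG G v : ℝ) + 1) = q := by exact_mod_cast hbq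
    field_simp
    linarith [this]
  have hq_pos : (0:ℝ) < q := by
    have : 0 < q := Nat.pos_of_ne_zero hq0
    exact_mod_cast this
  have hqC : (q : ℝ) * C = ((newPairs G G').card : ℝ) * ((a : ℝ) + (b : ℝ)) := by
    calc (q : ℝ) * C
        = ((newPairs G G').card : ℝ) *
            ((q : ℝ) * (1/((degG G u : ℝ)+1)) + (q : ℝ) * (1/((degG G v : ℝ)+1))) := by
          rw [hC]; ring
      _ = ((newPairs G G').card : ℝ) * ((a : ℝ) + (b : ℝ)) := by rw [hA, hB]
  have hρlt : (ρ : ℝ) < ((newPairs G G').card : ℝ) * ((a : ℝ) + (b : ℝ)) := by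
    have h3 : (q : ℝ) * EMDG G u v < (q : ℝ) * (1 + C) :=
      mul_lt_mul_of_pos_left hEMDlt hq_pos
    have h4 : (q : ℝ) * (1 + C) = (q : ℝ) + (q : ℝ) * C := by ring
    rw [hρ]
    linarith [hqC]
  -- counting: |newPairs| ≤ 2 * ncard
  set N : ℕ := (G'.edgeSet \ G.edgeSet).ncard with hN
  have hfin : (G'.edgeSet \ G.edgeSet).Finite := Set.toFinite _
  set T : Finset (Sym2 V) := hfin.toFinset with hT
  have hNT : N = T.card := Set.ncard_eq_toFinset_card _ hfin
  have hPN : (newPairs G G').card ≤ 2 * N := by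
    have hmap : ∀ p ∈ newPairs G G', s(p.1, p.2) ∈ T := by
      intro p hp
      simp only [newPairs, mem_filter, mem_univ, true_and] at hp
      rw [hT, Set.Finite.mem_toFinset]
      exact ⟨(SimpleGraph.mem_edgeSet G').mpr hp.1, fun h => hp.2 ((SimpleGraph.mem_edgeSet G).mp h)⟩
    have hcard := Finset.card_eq_sum_card_fiberwise hmap
    have hfib : ∀ e ∈ T, ((newPairs G G').filter fun p => s(p.1, p.2) = e).card ≤ 2 := by
      intro e _
      induction e using Sym2.ind with
      | _ c d =>
        have hsub : ((newPairs G G').filter fun p => s(p.1, p.2) = s(c, d))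
            ⊆ {(c, d), (d, c)} := by
          intro p hp
          have := (mem_filter.mp hp).2
          rw [Sym2.eq_iff] at this
          rcases this with ⟨h1, h2⟩ | ⟨h1, h2⟩
          · simp [Prod.ext_iff, h1, h2]
          · simp [Prod.ext_iff, h1, h2]
        calc ((newPairs G G').filter fun p => s(p.1, p.2) = s(c, d)).card
            ≤ ({(c, d), (d, c)} : Finset (V × V)).card := Finset.card_le_card hsub
          _ ≤ 2 := Finset.card_insert_le _ _ |>.trans (by simp)
    calc (newPairs G G').card = ∑ e ∈ T, ((newPairs G G').filter
          fun p => s(p.1, p.2) = e).card := hcard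
      _ ≤ ∑ _e ∈ T, 2 := Finset.sum_le_sum hfib
      _ = 2 * T.card := by rw [Finset.sum_const, smul_eq_mul, mul_comm]
      _ = 2 * N := by rw [hNT]
  -- integer rounding
  have ha1 : 1 ≤ a := by
    rcases Nat.eq_zero_or_pos a with h | h
    · exfalso; apply hq0; rw [← haq, h, zero_mul]
    · exact h
  have hb1 : 1 ≤ b := by
    rcases Nat.eq_zero_or_pos b with h | h
    · exfalso; apply hq0; rw [← hbq, h, zero_mul]
    · exact h
  have hρlt2 : (ρ : ℝ) < ((2 * N * (a + b) : ℕ) : ℝ) := by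
    have hPN' : ((newPairs G G').card : ℝ) ≤ ((2 * N : ℕ) : ℝ) := by exact_mod_cast hPN
    have hab0 : (0:ℝ) ≤ (a : ℝ) + (b : ℝ) := by positivity
    have := mul_le_mul_of_nonneg_right hPN' hab0
    push_cast
    push_cast at this hρlt
    linarith
  have hρint : ρ < ((2 * N * (a + b) : ℕ) : ℤ) := by exact_mod_cast hρlt2
  have hρ1 : (ρ : ℝ) + 1 ≤ ((2 * N * (a + b) : ℕ) : ℝ) := by
    have : ρ + 1 ≤ ((2 * N * (a + b) : ℕ) : ℤ) := hρint
    exact_mod_cast this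
  have h2ab : (0:ℝ) < 2 * ((a : ℝ) + (b : ℝ)) := by
    have : (1:ℝ) ≤ a := by exact_mod_cast ha1
    linarith
  rw [div_le_iff₀ h2ab]
  push_cast at hρ1
  linarith [hρ1]
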